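/- (Carleson functional controls tent integrals — endpoint multiplication ingredient.) Let μ be a nonnegative Borel measure on ℝ^{n+1}_+ with Carleson norm C_μ = sup_{B} μ(T(B))/|B| < ∞ (supremum over all balls B ⊆ ℝⁿ, T(B) the tent over B), and let f : ℝ^{n+1}_+ → [0,∞] be measurable with nontangential maximal function 𝒩(f) ∈ L^p(ℝⁿ) for some 0 < p < ∞. Then ∫∫_{ℝ^{n+1}_+} f(y,t)^p dμ(y,t) ≤ C(n,p) · ‖𝒩(f)‖_{L^p}^p · C_μ. -/

import Mathlib

open MeasureTheory Metric Set

private lemma ball_univ_dim0 (x₀ : EuclideanSpace ℝ (Fin 0)) {r : ℝ} (hr : 0 < r) :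
    ball x₀ r = univ := by
  ext y
  have : y = x₀ := by ext i; exact i.elim0
  simp [mem_ball, this, hr]

/-- Key geometric step: if every point of `E` lies in a "tent" over a ball contained in the
open set `O` of finite volume, then `μ E ≤ 5^n ⬝ Cμ ⬝ vol O`. -/
private lemma tent_measure_bound (n : ℕ) (μ : Measure (EuclideanSpace ℝ (Fin n) × ℝ))
    (Cμ : ENNReal)
    (hμ : ∀ (x₀ : EuclideanSpace ℝ (Fin n)) (r : ℝ), 0 < r →
      μ {q : EuclideanSpace ℝ (Fin n) × ℝ | 0 < q.2 ∧ ball q.1 q.2 ⊆ ball x₀ r}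
        ≤ Cμ * volume (ball x₀ r))
    (E : Set (EuclideanSpace ℝ (Fin n) × ℝ)) (O : Set (EuclideanSpace ℝ (Fin n)))
    (hO : IsOpen O) (hvol : volume O ≠ ⊤)
    (hE : ∀ q ∈ E, 0 < q.2 ∧ ball q.1 q.2 ⊆ O) :
    μ E ≤ ENNReal.ofReal ((5:ℝ) ^ n) * Cμ * volume O := by
  classical
  rcases E.eq_empty_or_nonempty with rfl | ⟨q₀, hq₀⟩
  · simp
  rcases Nat.eq_zero_or_pos n with hn | hn
  · subst hn
    have hOuniv : O = univ := univ_subset_iff.1 (by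
      rw [← ball_univ_dim0 q₀.1 (hE q₀ hq₀).1]
      exact (hE q₀ hq₀).2)
    have h1 : μ E ≤ μ {q : EuclideanSpace ℝ (Fin 0) × ℝ |
        0 < q.2 ∧ ball q.1 q.2 ⊆ ball q₀.1 1} := by
      apply measure_mono
      intro q hq
      exact ⟨(hE q hq).1, by rw [ball_univ_dim0 q₀.1 one_pos]; exact subset_univ _⟩
    calc μ E ≤ Cμ * volume (ball q₀.1 1) := h1.trans (hμ q₀.1 1 one_pos)
      _ = ENNReal.ofReal ((5:ℝ) ^ 0) * Cμ * volume O := by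
          rw [ball_univ_dim0 q₀.1 one_pos, hOuniv]
          norm_num
  -- now n ≥ 1
  have hd : Module.finrank ℝ (EuclideanSpace ℝ (Fin n)) = n :=
    finrank_euclideanSpace_fin
  have hV0 : 0 < volume (ball (0 : EuclideanSpace ℝ (Fin n)) 1) :=
    measure_ball_pos _ _ one_pos
  have hVtop : volume (ball (0 : EuclideanSpace ℝ (Fin n)) 1) ≠ ⊤ :=
    measure_ball_lt_top.ne
  set K : ENNReal := volume O / volume (ball (0 : EuclideanSpace ℝ (Fin n)) 1) with hK
  have hKtop : K ≠ ⊤ :=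
    (ENNReal.div_lt_top hvol hV0.ne').ne
  set R : ℝ := max 1 K.toReal with hR
  have hRb : ∀ (x : EuclideanSpace ℝ (Fin n)) (t : ℝ), ball x t ⊆ O → t ≤ R := by
    intro x t ht
    rcases le_or_gt t 1 with h1 | h1
    · exact h1.trans (le_max_left _ _)
    refine le_max_of_le_right ?_
    have hball : volume (ball x t) ≤ volume O := measure_mono ht
    rw [Measure.addHaar_ball_of_pos _ x (by linarith : (0:ℝ) < t), hd] at hball
    have h2 : ENNReal.ofReal (t ^ n) ≤ K := by
      rw [hK, ENNReal.le_div_iff_mul_le (Or.inl hV0.ne') (Or.inl hVtop)]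
      exact hball
    have h3 : t ^ n ≤ K.toReal := (ENNReal.ofReal_le_iff_le_toReal hKtop).1 h2
    calc t ≤ t ^ n := le_self_pow₀ h1.le (by omega)
      _ ≤ K.toReal := h3
  have hOc : Oᶜ.Nonempty := by
    by_contra h
    rw [not_nonempty_iff_eq_empty, compl_empty_iff] at h
    have := hRb 0 (R + 1) (by rw [h]; exact subset_univ _)
    linarith
  set r : EuclideanSpace ℝ (Fin n) → ℝ := fun x => infDist x Oᶜ with hr_def
  have hball_r : ∀ x, ball x (r x) ⊆ O := fun x => ball_infDist_compl_subset
  have hr_pos : ∀ x ∈ O, 0 < r x := by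
    intro x hx
    rcases Metric.isOpen_iff.1 hO x hx with ⟨ε, hε, hb⟩
    by_contra hcon
    push_neg at hcon
    rcases (infDist_lt_iff hOc).1 (lt_of_le_of_lt hcon hε) with ⟨y, hy, hdy⟩
    exact hy (hb (by rwa [mem_ball, dist_comm]))
  obtain ⟨u, huO, hdisj, hcov⟩ :=
    Vitali.exists_disjoint_subfamily_covering_enlargement_closedBall O id r R
      (fun a _ => hRb a (r a) (hball_r a)) 4 (by norm_num)
  simp only [id_eq] at hdisj hcov
  have hucnt : u.Countable :=
    hdisj.countable_of_nonempty_interior fun b hb =>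
      ⟨b, ball_subset_interior_closedBall (mem_ball_self (hr_pos b (huO hb)))⟩
  have hq_le_r : ∀ q ∈ E, q.2 ≤ r q.1 := by
    intro q hq
    by_contra hcon
    push_neg at hcon
    rcases (infDist_lt_iff hOc).1 hcon with ⟨y, hy, hdy⟩
    exact hy ((hE q hq).2 (by rwa [mem_ball, dist_comm]))
  have hEsub : E ⊆ ⋃ b ∈ u, {q : EuclideanSpace ℝ (Fin n) × ℝ |
      0 < q.2 ∧ ball q.1 q.2 ⊆ ball b (5 * r b)} := by
    intro q hq
    obtain ⟨hq2, hqO⟩ := hE q hq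
    obtain ⟨b, hb, hsub⟩ := hcov q.1 (hqO (mem_ball_self hq2))
    refine mem_biUnion hb ⟨hq2, ?_⟩
    have hrb : 0 < r b := hr_pos b (huO hb)
    intro z hz
    have hz1 : z ∈ closedBall q.1 (r q.1) :=
      closedBall_subset_closedBall (hq_le_r q hq) (ball_subset_closedBall hz)
    exact closedBall_subset_ball (by linarith) (hsub hz1)
  calc μ E ≤ μ (⋃ b ∈ u, {q : EuclideanSpace ℝ (Fin n) × ℝ |
        0 < q.2 ∧ ball q.1 q.2 ⊆ ball b (5 * r b)}) := measure_mono hEsub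
    _ ≤ ∑' b : u, μ {q : EuclideanSpace ℝ (Fin n) × ℝ |
        0 < q.2 ∧ ball q.1 q.2 ⊆ ball (b : EuclideanSpace ℝ (Fin n)) (5 * r b)} :=
        measure_biUnion_le μ hucnt _
    _ ≤ ∑' b : u, Cμ * volume (ball (b : EuclideanSpace ℝ (Fin n)) (5 * r b)) :=
        ENNReal.tsum_le_tsum fun b => hμ b _ (by have := hr_pos b (huO b.2); linarith)
    _ = ∑' b : u, (ENNReal.ofReal ((5:ℝ) ^ n) * Cμ) *
        volume (ball (b : EuclideanSpace ℝ (Fin n)) (r b)) := by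
        congr 1
        funext b
        rw [Measure.addHaar_ball_mul_of_pos volume (b : EuclideanSpace ℝ (Fin n))
          (by norm_num : (0:ℝ) < 5), hd, ← Measure.addHaar_ball_center volume
          (b : EuclideanSpace ℝ (Fin n)) (r b)]
        ring
    _ = (ENNReal.ofReal ((5:ℝ) ^ n) * Cμ) *
        ∑' b : u, volume (ball (b : EuclideanSpace ℝ (Fin n)) (r b)) :=
        ENNReal.tsum_mul_left
    _ = (ENNReal.ofReal ((5:ℝ) ^ n) * Cμ) * volume (⋃ b ∈ u, ball b (r b)) := by
        rw [measure_biUnion hucnt (hdisj.mono fun b => ball_subset_closedBall)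
          fun b _ => measurableSet_ball]
    _ ≤ ENNReal.ofReal ((5:ℝ) ^ n) * Cμ * volume O := by
        gcongr
        exact iUnion₂_subset fun b _ => hball_r b

/-- Layer cake formula for `ℝ≥0∞`-valued functions and arbitrary measures. -/
private lemma layercake_ennreal {α : Type*} [MeasurableSpace α] (ν : Measure α)
    {g : α → ENNReal} (hg : Measurable g) :
    ∫⁻ x, g x ∂ν = ∫⁻ t in Ioi (0:ℝ), ν {x | ENNReal.ofReal t < g x} := by
  by_cases htop : ν {x | g x = ⊤} = 0
  · have hae : ∀ᵐ x ∂ν, g x ≠ ⊤ := by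
      rw [ae_iff]
      simpa using htop
    have h1 : ∫⁻ x, g x ∂ν = ∫⁻ x, ENNReal.ofReal ((g x).toReal) ∂ν :=
      lintegral_congr_ae (hae.mono fun x hx => (ENNReal.ofReal_toReal hx).symm)
    rw [h1, lintegral_eq_lintegral_meas_lt ν (ae_of_all _ fun x => ENNReal.toReal_nonneg)
      hg.ennreal_toReal.aemeasurable]
    refine setLIntegral_congr_fun measurableSet_Ioi (fun t ht => ?_)
    refine measure_congr (Filter.eventuallyEq_set.2 (hae.mono fun x hx => ?_))
    simp only [mem_setOf_eq]
    rw [ENNReal.ofReal_lt_iff_lt_toReal (le_of_lt ht) hx]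
  · rw [lintegral_eq_top_of_measure_eq_top_ne_zero hg.aemeasurable htop]
    symm
    rw [eq_top_iff]
    have h3 : ∫⁻ _ in Ioi (0:ℝ), ν {x | g x = ⊤} = ⊤ := by
      rw [setLIntegral_const, Real.volume_Ioi, ENNReal.mul_top htop]
    rw [← h3]
    refine lintegral_mono fun t => measure_mono fun x hx => ?_
    simp only [mem_setOf_eq] at hx ⊢
    rw [hx]
    exact ENNReal.ofReal_lt_top

private lemma carleson_aux (n : ℕ) (p : ℝ) (hp : 0 < p)
    (μ : Measure (EuclideanSpace ℝ (Fin n) × ℝ)) (Cμ : ENNReal)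
    (f : EuclideanSpace ℝ (Fin n) × ℝ → ENNReal) (hf : Measurable f)
    (hμ : ∀ (x₀ : EuclideanSpace ℝ (Fin n)) (r : ℝ), 0 < r →
      μ {q : EuclideanSpace ℝ (Fin n) × ℝ | 0 < q.2 ∧ ball q.1 q.2 ⊆ ball x₀ r}
        ≤ Cμ * volume (ball x₀ r))
    (N : EuclideanSpace ℝ (Fin n) → ENNReal)
    (hNopen : ∀ lam : ENNReal, IsOpen {x | lam < N x})
    (hNge : ∀ (q : EuclideanSpace ℝ (Fin n) × ℝ) (x : EuclideanSpace ℝ (Fin n)),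
      dist q.1 x < q.2 → f q ≤ N x)
    (hNfin : (∫⁻ x, N x ^ p) < ⊤) :
    (∫⁻ q in {q : EuclideanSpace ℝ (Fin n) × ℝ | 0 < q.2}, f q ^ p ∂μ) ≤
      ENNReal.ofReal ((5:ℝ) ^ n) * (∫⁻ x, N x ^ p) * Cμ := by
  have hfp : Measurable fun q => f q ^ p := hf.pow_const p
  have hNmeas : Measurable N := measurable_of_Ioi fun lam => (hNopen lam).measurableSet
  have hNp : Measurable fun x => N x ^ p := hNmeas.pow_const p
  have hiff : ∀ (t : ℝ) (z : ENNReal), ENNReal.ofReal t < z ^ p ↔ ENNReal.ofReal t ^ p⁻¹ < z := by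
    intro t z
    have h := ENNReal.rpow_lt_rpow_iff (x := ENNReal.ofReal t) (y := z ^ p) (inv_pos.2 hp)
    rw [ENNReal.rpow_rpow_inv hp.ne' z] at h
    exact h.symm
  have hmono : Antitone fun t : ℝ => volume {x | ENNReal.ofReal t < N x ^ p} := by
    intro a b hab
    exact measure_mono fun x hx => lt_of_le_of_lt (ENNReal.ofReal_le_ofReal hab) hx
  have key : ∀ t ∈ Ioi (0:ℝ),
      (μ.restrict {q : EuclideanSpace ℝ (Fin n) × ℝ | 0 < q.2})
        {q | ENNReal.ofReal t < f q ^ p}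
      ≤ (ENNReal.ofReal ((5:ℝ) ^ n) * Cμ) * volume {x | ENNReal.ofReal t < N x ^ p} := by
    intro t ht
    rw [mem_Ioi] at ht
    set lam : ENNReal := ENNReal.ofReal t ^ p⁻¹ with hlam
    have hOsub : {x | lam < N x} ⊆ {x | ENNReal.ofReal t ≤ N x ^ p} :=
      fun x hx => le_of_lt ((hiff t (N x)).2 hx)
    have ht0 : ENNReal.ofReal t ≠ 0 := by
      simp [ENNReal.ofReal_eq_zero, not_le, ht]
    have hfin : volume {x | ENNReal.ofReal t ≤ N x ^ p} ≠ ⊤ := by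
      intro hcontra
      have hcheb := mul_meas_ge_le_lintegral₀ (μ := volume) hNp.aemeasurable (ENNReal.ofReal t)
      rw [hcontra, ENNReal.mul_top ht0] at hcheb
      exact hNfin.ne (top_le_iff.1 hcheb)
    have hvolO : volume {x | lam < N x} ≠ ⊤ := by
      intro h
      exact hfin (top_le_iff.1 (h ▸ measure_mono hOsub))
    have hres : (μ.restrict {q : EuclideanSpace ℝ (Fin n) × ℝ | 0 < q.2})
        {q | ENNReal.ofReal t < f q ^ p}
        = μ ({q : EuclideanSpace ℝ (Fin n) × ℝ | ENNReal.ofReal t < f q ^ p}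
            ∩ {q | 0 < q.2}) :=
      Measure.restrict_apply (hfp measurableSet_Ioi)
    rw [hres]
    have hEprop : ∀ q ∈ ({q : EuclideanSpace ℝ (Fin n) × ℝ | ENNReal.ofReal t < f q ^ p}
        ∩ {q | 0 < q.2}), 0 < q.2 ∧ ball q.1 q.2 ⊆ {x | lam < N x} := by
      rintro q ⟨hq1, hq2⟩
      refine ⟨hq2, fun y hy => ?_⟩
      have h1 : lam < f q := (hiff t (f q)).1 hq1
      have h2 : f q ≤ N y := hNge q y (by rwa [mem_ball, dist_comm] at hy)
      exact lt_of_lt_of_le h1 h2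
    have hbound := tent_measure_bound n μ Cμ hμ
      ({q : EuclideanSpace ℝ (Fin n) × ℝ | ENNReal.ofReal t < f q ^ p} ∩ {q | 0 < q.2})
      {x | lam < N x} (hNopen lam) hvolO hEprop
    have hseteq : {x | lam < N x} = {x | ENNReal.ofReal t < N x ^ p} := by
      ext x
      exact ((hiff t (N x)).symm)
    rw [hseteq] at hbound
    exact hbound
  calc (∫⁻ q in {q : EuclideanSpace ℝ (Fin n) × ℝ | 0 < q.2}, f q ^ p ∂μ)
      = ∫⁻ t in Ioi (0:ℝ), (μ.restrict {q : EuclideanSpace ℝ (Fin n) × ℝ | 0 < q.2})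
          {q | ENNReal.ofReal t < f q ^ p} := layercake_ennreal _ hfp
    _ ≤ ∫⁻ t in Ioi (0:ℝ), (ENNReal.ofReal ((5:ℝ) ^ n) * Cμ) *
          volume {x | ENNReal.ofReal t < N x ^ p} := by
        refine setLIntegral_mono (Measurable.const_mul hmono.measurable _) key
    _ = (ENNReal.ofReal ((5:ℝ) ^ n) * Cμ) *
          ∫⁻ t in Ioi (0:ℝ), volume {x | ENNReal.ofReal t < N x ^ p} :=
        lintegral_const_mul _ hmono.measurable
    _ = (ENNReal.ofReal ((5:ℝ) ^ n) * Cμ) * ∫⁻ x, N x ^ p := by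
        rw [← layercake_ennreal volume hNp]
    _ = ENNReal.ofReal ((5:ℝ) ^ n) * (∫⁻ x, N x ^ p) * Cμ := by ring

theorem carleson_inequality (n : ℕ) (p : ℝ) (hp : 0 < p) :
    ∃ C : ENNReal, 0 < C ∧ C ≠ ⊤ ∧
      ∀ (μ : Measure (EuclideanSpace ℝ (Fin n) × ℝ)) (Cμ : ENNReal)
        (f : EuclideanSpace ℝ (Fin n) × ℝ → ENNReal), Measurable f →
        (∀ (x₀ : EuclideanSpace ℝ (Fin n)) (r : ℝ), 0 < r →
          μ {q : EuclideanSpace ℝ (Fin n) × ℝ |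
              0 < q.2 ∧ ball q.1 q.2 ⊆ ball x₀ r} ≤ Cμ * volume (ball x₀ r)) →
        (∫⁻ x, (⨆ q ∈ {q : EuclideanSpace ℝ (Fin n) × ℝ | dist q.1 x < q.2}, f q) ^ p)
            < ⊤ →
        (∫⁻ q in {q : EuclideanSpace ℝ (Fin n) × ℝ | 0 < q.2}, f q ^ p ∂μ) ≤
          C * (∫⁻ x, (⨆ q ∈ {q : EuclideanSpace ℝ (Fin n) × ℝ |
              dist q.1 x < q.2}, f q) ^ p) * Cμ := by
  refine ⟨ENNReal.ofReal ((5:ℝ) ^ n), ENNReal.ofReal_pos.2 (by positivity),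
    ENNReal.ofReal_ne_top, ?_⟩
  intro μ Cμ f hf hμ hfin
  have hNopen : ∀ lam : ENNReal, IsOpen {x : EuclideanSpace ℝ (Fin n) |
      lam < ⨆ q ∈ {q : EuclideanSpace ℝ (Fin n) × ℝ | dist q.1 x < q.2}, f q} := by
    intro lam
    rw [Metric.isOpen_iff]
    intro x hx
    simp only [mem_setOf_eq, lt_iSup_iff] at hx
    obtain ⟨q, hq, hfq⟩ := hx
    refine ⟨q.2 - dist q.1 x, by linarith, fun y hy => ?_⟩
    rw [mem_ball] at hy
    have hdy : dist q.1 y < q.2 := by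
      have h1 := dist_triangle q.1 x y
      have h2 : dist x y = dist y x := dist_comm x y
      linarith
    simp only [mem_setOf_eq, lt_iSup_iff]
    exact ⟨q, hdy, hfq⟩
  exact carleson_aux n p hp μ Cμ f hf hμ
    (fun x => ⨆ q ∈ {q : EuclideanSpace ℝ (Fin n) × ℝ | dist q.1 x < q.2}, f q)
    hNopen
    (fun q x hqx => le_iSup₂ (f := fun (q : EuclideanSpace ℝ (Fin n) × ℝ)
      (_ : q ∈ {q : EuclideanSpace ℝ (Fin n) × ℝ | dist q.1 x < q.2}) => f q) q hqx)
    hfin
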